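/- Let Ω ⊆ ℝ^N be nonempty open of finite measure, ω : Ω × Ω → [0,∞) continuous and symmetric with ω ≥ k > 0, and u ∈ L^1(Ω) with weak nonlocal gradient ∇_ω u ∈ L^1(Ω × Ω; ℝ^N) (induced by ω). Then u has weak nonlocal gradient induced by the constant weight 1, ∇_1 u = ∇_ω u / ω ∈ L^1(Ω × Ω; ℝ^N), and ‖∇_1 u‖_{L^1(Ω×Ω)} ≤ (1/k) ‖∇_ω u‖_{L^1(Ω×Ω)}. -/

import Mathlib

open MeasureTheory Set Metric
open scoped ENNReal NNReal

/-- The nonlocal adjoint `i`-th partial derivative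
`∂*_{ω,i}(ψ)(x) = ∫_Ω ∂_{x_i}[ω(x,y)(ψ(y,x) − ψ(x,y))] dy` of a test function `ψ`. -/
noncomputable def nlAdjDeriv {N : ℕ} (Ω : Set (EuclideanSpace ℝ (Fin N)))
    (ω : EuclideanSpace ℝ (Fin N) → EuclideanSpace ℝ (Fin N) → ℝ) (i : Fin N)
    (ψ : EuclideanSpace ℝ (Fin N) × EuclideanSpace ℝ (Fin N) → ℝ)
    (x : EuclideanSpace ℝ (Fin N)) : ℝ :=
  ∫ y in Ω, fderiv ℝ (fun x' => ω x' y * (ψ (y, x') - ψ (x', y))) x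
    (EuclideanSpace.single i (1:ℝ))

/-- `G : Ω × Ω → ℝ^N` is a weak nonlocal gradient of `u` induced by the weight `ω`:
for each direction `i` and each test function `ψ ∈ C_c^1(Ω × Ω)`,
`∫_Ω u ∂*_{ω,i}(ψ) dx = −∫_{Ω×Ω} G_i ψ dx dy`. -/
def HasNLGradientOn {N : ℕ} (Ω : Set (EuclideanSpace ℝ (Fin N)))
    (ω : EuclideanSpace ℝ (Fin N) → EuclideanSpace ℝ (Fin N) → ℝ)
    (u : EuclideanSpace ℝ (Fin N) → ℝ)
    (G : EuclideanSpace ℝ (Fin N) × EuclideanSpace ℝ (Fin N) → EuclideanSpace ℝ (Fin N)) :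
    Prop :=
  ∀ i : Fin N, ∀ ψ : EuclideanSpace ℝ (Fin N) × EuclideanSpace ℝ (Fin N) → ℝ,
    ContDiff ℝ 1 ψ → HasCompactSupport ψ → tsupport ψ ⊆ Ω ×ˢ Ω →
    ∫ x in Ω, u x * nlAdjDeriv Ω ω i ψ x
      = - ∫ z, (G z) i * ψ z ∂((volume.restrict Ω).prod (volume.restrict Ω))

/-- Let `Ω` be nonempty open of finite measure, `ω` a `C^1` symmetric weight
with `ω ≥ k > 0`, and `u ∈ L^1(Ω)` with weak nonlocal gradient `∇_ω u ∈ L^1(Ω × Ω; ℝ^N)`.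
Then `∇_1 u = ∇_ω u / ω` is a weak nonlocal gradient of `u` for the constant weight `1`,
it belongs to `L^1(Ω × Ω; ℝ^N)`, and `‖∇_1 u‖_{L^1} ≤ (1/k) ‖∇_ω u‖_{L^1}`. -/
theorem statement18 (N : ℕ) (Ω : Set (EuclideanSpace ℝ (Fin N)))
    (hΩ_open : IsOpen Ω) (hΩ_ne : Ω.Nonempty) (hΩ_fin : volume Ω < ⊤)
    (ω : EuclideanSpace ℝ (Fin N) → EuclideanSpace ℝ (Fin N) → ℝ)
    (hω_smooth : ContDiffOn ℝ 1 (fun z : EuclideanSpace ℝ (Fin N) × EuclideanSpace ℝ (Fin N)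
      => ω z.1 z.2) (Ω ×ˢ Ω))
    (hω_nonneg : ∀ x ∈ Ω, ∀ y ∈ Ω, 0 ≤ ω x y)
    (hω_symm : ∀ x ∈ Ω, ∀ y ∈ Ω, ω x y = ω y x)
    (k : ℝ) (hk : 0 < k) (hω_lb : ∀ x ∈ Ω, ∀ y ∈ Ω, k ≤ ω x y)
    (u : EuclideanSpace ℝ (Fin N) → ℝ)
    (Gω : EuclideanSpace ℝ (Fin N) × EuclideanSpace ℝ (Fin N) → EuclideanSpace ℝ (Fin N))
    (hu : Integrable u (volume.restrict Ω))
    (hGω : HasNLGradientOn Ω ω u Gω)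
    (hGω_int : Integrable Gω ((volume.restrict Ω).prod (volume.restrict Ω))) :
    HasNLGradientOn Ω (fun _ _ => (1:ℝ)) u (fun z => (ω z.1 z.2)⁻¹ • Gω z) ∧
    Integrable (fun z => (ω z.1 z.2)⁻¹ • Gω z)
      ((volume.restrict Ω).prod (volume.restrict Ω)) ∧
    ∫⁻ z, (‖(ω z.1 z.2)⁻¹ • Gω z‖₊ : ℝ≥0∞)
        ∂((volume.restrict Ω).prod (volume.restrict Ω))
      ≤ (ENNReal.ofReal k)⁻¹ *
        ∫⁻ z, (‖Gω z‖₊ : ℝ≥0∞) ∂((volume.restrict Ω).prod (volume.restrict Ω)) := by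
  classical
  have hmeasΩΩ : MeasurableSet (Ω ×ˢ Ω) := (hΩ_open.prod hΩ_open).measurableSet
  have hprod : (volume.restrict Ω).prod (volume.restrict Ω)
      = ((volume : Measure (EuclideanSpace ℝ (Fin N))).prod volume).restrict (Ω ×ˢ Ω) :=
    Measure.prod_restrict Ω Ω
  have hωpos : ∀ z ∈ Ω ×ˢ Ω, 0 < ω z.1 z.2 := fun z hz =>
    lt_of_lt_of_le hk (hω_lb z.1 hz.1 z.2 hz.2)
  have hωc : ContinuousOn (fun z : EuclideanSpace ℝ (Fin N) × EuclideanSpace ℝ (Fin N)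
      => ω z.1 z.2) (Ω ×ˢ Ω) := hω_smooth.continuousOn
  -- integrability
  have hωm : AEStronglyMeasurable (fun z : EuclideanSpace ℝ (Fin N) × EuclideanSpace ℝ (Fin N)
      => (ω z.1 z.2)⁻¹) ((volume.restrict Ω).prod (volume.restrict Ω)) := by
    rw [hprod]
    exact ((hωc.aestronglyMeasurable hmeasΩΩ).aemeasurable.inv).aestronglyMeasurable
  have hInt : Integrable (fun z => (ω z.1 z.2)⁻¹ • Gω z)
      ((volume.restrict Ω).prod (volume.restrict Ω)) := by
    refine Integrable.mono' (hGω_int.norm.const_mul k⁻¹) (hωm.smul hGω_int.1) ?_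
    rw [hprod]
    filter_upwards [ae_restrict_mem hmeasΩΩ] with z hz
    rw [norm_smul]
    have h1 : k ≤ ω z.1 z.2 := hω_lb z.1 hz.1 z.2 hz.2
    have h2 : ‖(ω z.1 z.2)⁻¹‖ ≤ k⁻¹ := by
      rw [Real.norm_eq_abs, abs_of_nonneg (inv_nonneg.mpr (le_of_lt (hωpos z hz)))]
      exact inv_anti₀ hk h1
    exact mul_le_mul_of_nonneg_right h2 (norm_nonneg _)
  refine ⟨?_, hInt, ?_⟩
  · -- the gradient statement
    intro i ψ hψ hψc hψs
    set φ : EuclideanSpace ℝ (Fin N) × EuclideanSpace ℝ (Fin N) → ℝ :=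
      fun z => if z ∈ Ω ×ˢ Ω then ψ z * (ω z.1 z.2)⁻¹ else 0 with hφdef
    have hsupp : Function.support φ ⊆ Function.support ψ := by
      intro z hz
      simp only [hφdef, Function.mem_support] at hz ⊢
      intro h
      apply hz
      split <;> simp [h]
    have hφs : tsupport φ ⊆ Ω ×ˢ Ω := (closure_mono hsupp).trans hψs
    have hφc : HasCompactSupport φ :=
      IsCompact.of_isClosed_subset hψc isClosed_closure (closure_mono hsupp)
    have hopen : IsOpen (Ω ×ˢ Ω) := hΩ_open.prod hΩ_open
    have hφ : ContDiff ℝ 1 φ := by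
      rw [contDiff_iff_contDiffAt]
      intro z
      by_cases hz : z ∈ Ω ×ˢ Ω
      · have hcd : ContDiffOn ℝ 1 (fun z : EuclideanSpace ℝ (Fin N) × EuclideanSpace ℝ (Fin N)
            => ψ z * (ω z.1 z.2)⁻¹) (Ω ×ˢ Ω) :=
          hψ.contDiffOn.mul (hω_smooth.inv fun w hw => ne_of_gt (hωpos w hw))
        have h1 : ContDiffAt ℝ 1 (fun z : EuclideanSpace ℝ (Fin N) × EuclideanSpace ℝ (Fin N)
            => ψ z * (ω z.1 z.2)⁻¹) z := hcd.contDiffAt (hopen.mem_nhds hz)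
        refine h1.congr_of_eventuallyEq ?_
        filter_upwards [hopen.mem_nhds hz] with w hw
        exact if_pos hw
      · have hz' : z ∉ tsupport ψ := fun h => hz (hψs h)
        have heq : φ =ᶠ[nhds z] (fun _ => (0:ℝ)) := by
          filter_upwards [(isClosed_tsupport ψ).isOpen_compl.mem_nhds hz'] with w hw
          have : ψ w = 0 := image_eq_zero_of_notMem_tsupport hw
          simp [hφdef, this]
        exact (contDiffAt_const (c := (0:ℝ))).congr_of_eventuallyEq heq
    have key := hGω i φ hφ hφc hφs
    have hA : ∀ x ∈ Ω, u x * nlAdjDeriv Ω (fun _ _ => (1:ℝ)) i ψ x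
        = u x * nlAdjDeriv Ω ω i φ x := by
      intro x hx
      congr 1
      unfold nlAdjDeriv
      refine setIntegral_congr_fun hΩ_open.measurableSet fun y hy => ?_
      have heq : (fun x' => (fun _ _ => (1:ℝ)) x' y * (ψ (y, x') - ψ (x', y)))
          =ᶠ[nhds x] fun x' => ω x' y * (φ (y, x') - φ (x', y)) := by
        filter_upwards [hΩ_open.mem_nhds hx] with x' hx'
        have h1 : φ (y, x') = ψ (y, x') * (ω y x')⁻¹ := if_pos ⟨hy, hx'⟩
        have h2 : φ (x', y) = ψ (x', y) * (ω x' y)⁻¹ := if_pos ⟨hx', hy⟩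
        have hs : ω y x' = ω x' y := hω_symm y hy x' hx'
        have hne : ω x' y ≠ 0 := ne_of_gt (hωpos (x', y) ⟨hx', hy⟩)
        simp only [h1, h2, hs]
        field_simp
      rw [heq.fderiv_eq]
    have hB : ∫ z, Gω z i * φ z ∂((volume.restrict Ω).prod (volume.restrict Ω))
        = ∫ z, ((ω z.1 z.2)⁻¹ • Gω z) i * ψ z
            ∂((volume.restrict Ω).prod (volume.restrict Ω)) := by
      rw [hprod]
      refine integral_congr_ae ?_
      filter_upwards [ae_restrict_mem hmeasΩΩ] with z hz
      have h1 : φ z = ψ z * (ω z.1 z.2)⁻¹ := if_pos hz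
      simp only [h1, PiLp.smul_apply, smul_eq_mul]
      ring
    calc ∫ x in Ω, u x * nlAdjDeriv Ω (fun _ _ => (1:ℝ)) i ψ x
        = ∫ x in Ω, u x * nlAdjDeriv Ω ω i φ x :=
          setIntegral_congr_fun hΩ_open.measurableSet hA
      _ = - ∫ z, Gω z i * φ z ∂((volume.restrict Ω).prod (volume.restrict Ω)) := key
      _ = _ := by rw [hB]
  · -- the lintegral bound
    have hpt : ∀ᵐ z ∂((volume.restrict Ω).prod (volume.restrict Ω)),
        (‖(ω z.1 z.2)⁻¹ • Gω z‖₊ : ℝ≥0∞) ≤ ENNReal.ofReal k⁻¹ * (‖Gω z‖₊ : ℝ≥0∞) := by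
      rw [hprod]
      filter_upwards [ae_restrict_mem hmeasΩΩ] with z hz
      have h1 : k ≤ ω z.1 z.2 := hω_lb z.1 hz.1 z.2 hz.2
      rw [← enorm_eq_nnnorm, ← enorm_eq_nnnorm, ← ofReal_norm, ← ofReal_norm,
        ← ENNReal.ofReal_mul (by positivity)]
      apply ENNReal.ofReal_le_ofReal
      rw [norm_smul]
      refine mul_le_mul_of_nonneg_right ?_ (norm_nonneg _)
      rw [Real.norm_eq_abs, abs_of_nonneg (inv_nonneg.mpr (le_of_lt (hωpos z hz)))]
      exact inv_anti₀ hk h1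
    calc ∫⁻ z, (‖(ω z.1 z.2)⁻¹ • Gω z‖₊ : ℝ≥0∞)
          ∂((volume.restrict Ω).prod (volume.restrict Ω))
        ≤ ∫⁻ z, ENNReal.ofReal k⁻¹ * (‖Gω z‖₊ : ℝ≥0∞)
          ∂((volume.restrict Ω).prod (volume.restrict Ω)) := lintegral_mono_ae hpt
      _ = ENNReal.ofReal k⁻¹ * ∫⁻ z, (‖Gω z‖₊ : ℝ≥0∞)
          ∂((volume.restrict Ω).prod (volume.restrict Ω)) :=
          lintegral_const_mul' _ _ ENNReal.ofReal_ne_top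
      _ = (ENNReal.ofReal k)⁻¹ * _ := by rw [ENNReal.ofReal_inv_of_pos hk]
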